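/- Let $\Gamma$ be a finite connected graph, and for a function $f: V\Gamma \to \mathbb{R}$ define $\nabla f(x) = \max\{|f(x)-f(y)| : xy \in E\Gamma\}$. Define $h^p(\Gamma) = \inf \{\|\nabla f\|_p / \|f\|_p : \sum_{v} f(v) = 0, f \not\equiv 0\}$. Then for every $p \in [1,\infty)$, $h^p(\Gamma)^p \leq 2^p h^1(\Gamma)$. -/

import Mathlib

open Finset

lemma my_rpow_add_rpow_le_add {p : ℝ} (hp : 1 ≤ p) {a b : ℝ} (ha : 0 ≤ a) (hb : 0 ≤ b) :
    (a + b) ^ (1/p) ≤ a ^ (1/p) + b ^ (1/p) := by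
  have hp0 : p ≠ 0 := by positivity
  lift a to NNReal using ha
  lift b to NNReal using hb
  have h := NNReal.rpow_add_rpow_le_add (a ^ (1/p)) (b ^ (1/p)) hp
  rw [← NNReal.rpow_mul, ← NNReal.rpow_mul, one_div_mul_cancel hp0, NNReal.rpow_one,
    NNReal.rpow_one] at h
  exact_mod_cast h

lemma my_two_rpow {p : ℝ} (hp : 1 ≤ p) {x y : ℝ} (hx : 0 ≤ x) (hy : 0 ≤ y) :
    (x ^ (1/p) + y ^ (1/p)) ^ p ≤ 2 ^ (p-1) * (x + y) := by
  have hp0 : p ≠ 0 := by positivity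
  lift x to NNReal using hx
  lift y to NNReal using hy
  have h := NNReal.rpow_add_le_mul_rpow_add_rpow (x ^ (1/p)) (y ^ (1/p)) hp
  rw [← NNReal.rpow_mul, ← NNReal.rpow_mul, one_div_mul_cancel hp0, NNReal.rpow_one,
    NNReal.rpow_one] at h
  exact_mod_cast h

lemma my_sub_rpow {p : ℝ} (hp : 1 ≤ p) {x y : ℝ} (hy : 0 ≤ y) (hxy : y ≤ x) :
    (x ^ (1/p) - y ^ (1/p)) ^ p ≤ x - y := by
  have hp0 : p ≠ 0 := by positivity
  have h1p : (0:ℝ) ≤ 1/p := by positivity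
  have hxy' : (0:ℝ) ≤ x - y := sub_nonneg.2 hxy
  have h1 := my_rpow_add_rpow_le_add hp hy hxy'
  have hyx : y + (x - y) = x := by ring
  rw [hyx] at h1
  have h2 : x ^ (1/p) - y ^ (1/p) ≤ (x - y) ^ (1/p) := by linarith
  have h3 : 0 ≤ x ^ (1/p) - y ^ (1/p) :=
    sub_nonneg.2 (Real.rpow_le_rpow hy hxy h1p)
  calc (x ^ (1/p) - y ^ (1/p)) ^ p ≤ ((x - y) ^ (1/p)) ^ p :=
        Real.rpow_le_rpow h3 h2 (by linarith)
    _ = x - y := by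
        rw [← Real.rpow_mul hxy', one_div_mul_cancel hp0, Real.rpow_one]

noncomputable def sgnRpow (p t : ℝ) : ℝ := if t < 0 then -((-t) ^ (1/p)) else t ^ (1/p)

lemma abs_sgnRpow (p t : ℝ) : |sgnRpow p t| = |t| ^ (1/p) := by
  unfold sgnRpow
  split_ifs with h
  · rw [abs_neg, abs_of_nonneg (Real.rpow_nonneg (by linarith) _), abs_of_neg h]
  · rw [abs_of_nonneg (Real.rpow_nonneg (not_lt.1 h) _), abs_of_nonneg (not_lt.1 h)]

lemma abs_sgnRpow_rpow {p : ℝ} (hp : 1 ≤ p) (t : ℝ) : |sgnRpow p t| ^ p = |t| := by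
  have hp0 : p ≠ 0 := by positivity
  rw [abs_sgnRpow, ← Real.rpow_mul (abs_nonneg t), one_div_mul_cancel hp0, Real.rpow_one]

lemma sgnRpow_pos {p t : ℝ} (ht : 0 < t) : 0 < sgnRpow p t := by
  rw [sgnRpow, if_neg (not_lt.2 ht.le)]
  exact Real.rpow_pos_of_pos ht _

lemma sgnRpow_neg {p t : ℝ} (ht : t < 0) : sgnRpow p t < 0 := by
  rw [sgnRpow, if_pos ht]
  exact neg_neg_iff_pos.2 (Real.rpow_pos_of_pos (by linarith) _)

lemma sgnRpow_nonpos {p t : ℝ} (hp0 : p ≠ 0) (ht : t ≤ 0) : sgnRpow p t ≤ 0 := by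
  rcases eq_or_lt_of_le ht with h | h
  · subst h
    rw [sgnRpow, if_neg (lt_irrefl 0), Real.zero_rpow (one_div_ne_zero hp0)]
  · exact (sgnRpow_neg h).le

lemma sgnRpow_nonneg {p t : ℝ} (ht : 0 ≤ t) : 0 ≤ sgnRpow p t := by
  rw [sgnRpow, if_neg (not_lt.2 ht)]
  exact Real.rpow_nonneg ht _

lemma key_le {p : ℝ} (hp : 1 ≤ p) {a b : ℝ} (hba : b ≤ a) :
    |sgnRpow p a - sgnRpow p b| ^ p ≤ 2 ^ (p-1) * |a - b| := by
  have hp0 : p ≠ 0 := by positivity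
  have h1p : (0:ℝ) ≤ 1/p := by positivity
  have h2 : (1:ℝ) ≤ 2 ^ (p-1) := Real.one_le_rpow one_le_two (by linarith)
  rw [abs_of_nonneg (sub_nonneg.2 hba)]
  unfold sgnRpow
  by_cases hb : b < 0
  · by_cases ha : a < 0
    · rw [if_pos ha, if_pos hb]
      have he : -((-a) ^ (1/p)) - -((-b) ^ (1/p)) = (-b) ^ (1/p) - (-a) ^ (1/p) := by ring
      rw [he, abs_of_nonneg (sub_nonneg.2 (Real.rpow_le_rpow (by linarith) (by linarith) h1p))]
      calc ((-b) ^ (1/p) - (-a) ^ (1/p)) ^ p ≤ (-b) - (-a) :=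
            my_sub_rpow hp (by linarith) (by linarith)
        _ = a - b := by ring
        _ ≤ 2 ^ (p-1) * (a - b) := le_mul_of_one_le_left (by linarith) h2
    · rw [if_neg ha, if_pos hb]
      have ha' : 0 ≤ a := not_lt.1 ha
      have he : a ^ (1/p) - -((-b) ^ (1/p)) = a ^ (1/p) + (-b) ^ (1/p) := by ring
      have hb' : (0:ℝ) ≤ -b := by linarith
      rw [he, abs_of_nonneg (add_nonneg (Real.rpow_nonneg ha' _) (Real.rpow_nonneg hb' _))]
      calc (a ^ (1/p) + (-b) ^ (1/p)) ^ p ≤ 2 ^ (p-1) * (a + -b) := my_two_rpow hp ha' hb'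
        _ = 2 ^ (p-1) * (a - b) := by ring
  · have hb' : 0 ≤ b := not_lt.1 hb
    have ha : ¬ a < 0 := not_lt.2 (by linarith)
    rw [if_neg ha, if_neg hb,
      abs_of_nonneg (sub_nonneg.2 (Real.rpow_le_rpow hb' hba h1p))]
    calc (a ^ (1/p) - b ^ (1/p)) ^ p ≤ a - b := my_sub_rpow hp hb' hba
      _ ≤ 2 ^ (p-1) * (a - b) := le_mul_of_one_le_left (by linarith) h2

lemma key_ineq {p : ℝ} (hp : 1 ≤ p) (a b : ℝ) :
    |sgnRpow p a - sgnRpow p b| ^ p ≤ 2 ^ (p-1) * |a - b| := by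
  rcases le_total b a with h | h
  · exact key_le hp h
  · rw [abs_sub_comm, abs_sub_comm a b]
    exact key_le hp h

/-- The max-over-neighbours gradient of a function on a graph. -/
noncomputable def gradMax {V : Type*} (G : SimpleGraph V) (f : V → ℝ) (x : V) : ℝ :=
  sSup ((fun y => |f x - f y|) '' {y | G.Adj x y})

/-- The `ℓ^p` norm of a function on the (finite) vertex set. -/
noncomputable def lpNorm {V : Type*} [Fintype V] (p : ℝ) (g : V → ℝ) : ℝ :=
  (∑ v, |g v| ^ p) ^ (1 / p)

/-- The `L^p` Poincaré constant of a finite graph. -/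
noncomputable def poincareConst {V : Type*} [Fintype V] (G : SimpleGraph V) (p : ℝ) : ℝ :=
  sInf {r : ℝ | ∃ f : V → ℝ, (∑ v, f v) = 0 ∧ f ≠ 0 ∧
    r = lpNorm p (gradMax G f) / lpNorm p f}

lemma gradMax_nonneg {V : Type*} [Fintype V] (G : SimpleGraph V) (f : V → ℝ) (x : V) :
    0 ≤ gradMax G f x := by
  unfold gradMax
  rcases Set.eq_empty_or_nonempty ((fun y => |f x - f y|) '' {y | G.Adj x y}) with h | h
  · rw [h, Real.sSup_empty]
  · obtain ⟨z, hz⟩ := h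
    obtain ⟨y, hy, rfl⟩ := hz
    exact le_trans (abs_nonneg _)
      (le_csSup (Set.Finite.bddAbove (Set.toFinite _)) ⟨y, hy, rfl⟩)

lemma le_gradMax {V : Type*} [Fintype V] {G : SimpleGraph V} {x y : V} (h : G.Adj x y)
    (f : V → ℝ) : |f x - f y| ≤ gradMax G f x :=
  le_csSup (Set.Finite.bddAbove (Set.toFinite _)) ⟨y, h, rfl⟩

lemma gradMax_mem {V : Type*} [Fintype V] {G : SimpleGraph V} {x : V}
    (h : ∃ y, G.Adj x y) (f : V → ℝ) :
    ∃ y, G.Adj x y ∧ gradMax G f x = |f x - f y| := by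
  have hne : ((fun y => |f x - f y|) '' {y | G.Adj x y}).Nonempty := by
    obtain ⟨y, hy⟩ := h
    exact ⟨_, y, hy, rfl⟩
  obtain ⟨y, hy, he⟩ := hne.csSup_mem (Set.toFinite _)
  exact ⟨y, hy, he.symm⟩

lemma gradMax_sub_const {V : Type*} [Fintype V] (G : SimpleGraph V) (g : V → ℝ) (c : ℝ) :
    gradMax G (fun v => g v - c) = gradMax G g := by
  funext x
  unfold gradMax
  refine congrArg sSup (Set.image_congr fun y _ => ?_)
  show |(g x - c) - (g y - c)| = |g x - g y|
  congr 1
  ring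

lemma exists_adj {V : Type*} [Nontrivial V] {G : SimpleGraph V} (h : G.Connected) (x : V) :
    ∃ y, G.Adj x y := by
  obtain ⟨y, hy⟩ := exists_ne x
  obtain ⟨w⟩ := h.preconnected x y
  cases w with
  | nil => exact absurd rfl hy.symm
  | cons h _ => exact ⟨_, h⟩

lemma half_mass {V : Type*} [Fintype V] {f : V → ℝ} (hsum : ∑ v, f v = 0) :
    ∑ v ∈ Finset.univ.filter (fun v => f v ≤ 0), |f v| = (∑ v, |f v|) / 2 ∧
    ∑ v ∈ Finset.univ.filter (fun v => ¬ f v ≤ 0), |f v| = (∑ v, |f v|) / 2 := by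
  have hsplit := Finset.sum_filter_add_sum_filter_not Finset.univ (fun v => f v ≤ 0) f
  have habs := Finset.sum_filter_add_sum_filter_not Finset.univ (fun v => f v ≤ 0)
    (fun v => |f v|)
  have h1 : ∑ v ∈ Finset.univ.filter (fun v => f v ≤ 0), |f v|
      = -∑ v ∈ Finset.univ.filter (fun v => f v ≤ 0), f v := by
    rw [← Finset.sum_neg_distrib]
    exact Finset.sum_congr rfl fun v hv => abs_of_nonpos (Finset.mem_filter.1 hv).2
  have h2 : ∑ v ∈ Finset.univ.filter (fun v => ¬ f v ≤ 0), |f v|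
      = ∑ v ∈ Finset.univ.filter (fun v => ¬ f v ≤ 0), f v :=
    Finset.sum_congr rfl fun v hv => abs_of_pos (lt_of_not_ge (Finset.mem_filter.1 hv).2)
  rw [hsum] at hsplit
  constructor <;> linarith

lemma lpNorm_rpow {V : Type*} [Fintype V] {p : ℝ} (hppos : 0 < p) (g : V → ℝ) :
    (lpNorm p g) ^ p = ∑ v, |g v| ^ p := by
  unfold lpNorm
  rw [← Real.rpow_mul (Finset.sum_nonneg fun v _ => Real.rpow_nonneg (abs_nonneg _) _),
    one_div_mul_cancel hppos.ne', Real.rpow_one]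

lemma lpNorm_one {V : Type*} [Fintype V] (g : V → ℝ) : lpNorm 1 g = ∑ v, |g v| := by
  unfold lpNorm
  norm_num

lemma lpNorm_nonneg {V : Type*} [Fintype V] (p : ℝ) (g : V → ℝ) : 0 ≤ lpNorm p g :=
  Real.rpow_nonneg (Finset.sum_nonneg fun v _ => Real.rpow_nonneg (abs_nonneg _) _) _

/-- For a finite connected graph, `h^p(Γ)^p ≤ 2^p h^1(Γ)`. -/
theorem stmt4 {V : Type*} [Fintype V] (G : SimpleGraph V) (hconn : G.Connected)
    (p : ℝ) (hp : 1 ≤ p) :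
    (poincareConst G p) ^ p ≤ 2 ^ p * poincareConst G 1 := by
  have hppos : (0:ℝ) < p := by linarith
  have hp0 : p ≠ 0 := hppos.ne'
  unfold poincareConst
  set Sp := {r : ℝ | ∃ f : V → ℝ, (∑ v, f v) = 0 ∧ f ≠ 0 ∧
    r = lpNorm p (gradMax G f) / lpNorm p f} with hSpdef
  set S1 := {r : ℝ | ∃ f : V → ℝ, (∑ v, f v) = 0 ∧ f ≠ 0 ∧
    r = lpNorm 1 (gradMax G f) / lpNorm 1 f} with hS1def
  have hSpnonneg : ∀ r ∈ Sp, 0 ≤ r := by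
    rintro r ⟨f, -, -, rfl⟩
    exact div_nonneg (lpNorm_nonneg _ _) (lpNorm_nonneg _ _)
  have hbdd : BddBelow Sp := ⟨0, fun r hr => hSpnonneg r hr⟩
  rcases Set.eq_empty_or_nonempty S1 with hS1e | hS1ne
  · have hSpe : Sp = ∅ := by
      rw [Set.eq_empty_iff_forall_notMem]
      rintro r ⟨f, h1, h2, -⟩
      exact Set.eq_empty_iff_forall_notMem.1 hS1e _ ⟨f, h1, h2, rfl⟩
    rw [hS1e, hSpe, Real.sInf_empty, Real.zero_rpow hp0, mul_zero]
  · have hmain : ∀ r ∈ S1, (sInf Sp) ^ p ≤ 2 ^ p * r := by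
      rintro r ⟨f, hsum, hf0, rfl⟩
      obtain ⟨v0, hv0⟩ := Function.ne_iff.1 hf0
      obtain ⟨u, hu⟩ : ∃ u, 0 < f u := by
        by_contra hcon
        push_neg at hcon
        have h := Finset.sum_lt_sum (fun i (_ : i ∈ Finset.univ) => hcon i)
          ⟨v0, Finset.mem_univ v0, lt_of_le_of_ne (hcon v0) hv0⟩
        rw [hsum, Finset.sum_const_zero] at h
        exact lt_irrefl 0 h
      obtain ⟨w, hw⟩ : ∃ w, f w < 0 := by
        by_contra hcon
        push_neg at hcon
        have h := Finset.sum_lt_sum (fun i (_ : i ∈ Finset.univ) => hcon i)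
          ⟨v0, Finset.mem_univ v0, (hcon v0).lt_of_ne (Ne.symm hv0)⟩
        rw [hsum, Finset.sum_const_zero] at h
        exact lt_irrefl 0 h
      have hVnt : Nontrivial V := ⟨⟨u, w, fun he => by rw [he] at hu; linarith⟩⟩
      have hadj : ∀ x : V, ∃ y, G.Adj x y := exists_adj hconn
      have hcard : (0:ℝ) < (Fintype.card V : ℝ) := by exact_mod_cast Fintype.card_pos
      set g : V → ℝ := fun v => sgnRpow p (f v) with hgdef
      set c : ℝ := (∑ v, g v) / (Fintype.card V : ℝ) with hcdef
      set h : V → ℝ := fun v => g v - c with hhdef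
      have hsumh : ∑ v, h v = 0 := by
        simp only [hhdef, Finset.sum_sub_distrib, Finset.sum_const, Finset.card_univ,
          nsmul_eq_mul, hcdef]
        field_simp
        ring
      have hh0 : h ≠ 0 := by
        intro h0
        have h1 : g u - c = 0 := congrFun h0 u
        have h2 : g w - c = 0 := congrFun h0 w
        have hgu : 0 < g u := sgnRpow_pos hu
        have hgw : g w < 0 := sgnRpow_neg hw
        linarith
      have hmem : lpNorm p (gradMax G h) / lpNorm p h ∈ Sp := ⟨h, hsumh, hh0, rfl⟩
      have hinf0 : 0 ≤ sInf Sp := le_csInf ⟨_, hmem⟩ hSpnonneg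
      have hgradh : ∀ v, gradMax G h v = gradMax G g v :=
        fun v => congrFun (gradMax_sub_const G g c) v
      have hApB : ∑ v, |gradMax G h v| ^ p ≤ 2 ^ (p-1) * ∑ v, |gradMax G f v| := by
        rw [Finset.mul_sum]
        apply Finset.sum_le_sum
        intro v _
        rw [abs_of_nonneg (gradMax_nonneg G h v), hgradh v]
        obtain ⟨y, hy, he⟩ := gradMax_mem (hadj v) g
        rw [he]
        have h2nn : (0:ℝ) ≤ 2 ^ (p-1) := Real.rpow_nonneg (by norm_num) _
        calc |g v - g y| ^ p ≤ 2 ^ (p-1) * |f v - f y| := key_ineq hp (f v) (f y)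
          _ ≤ 2 ^ (p-1) * |gradMax G f v| := by
              apply mul_le_mul_of_nonneg_left _ h2nn
              rw [abs_of_nonneg (gradMax_nonneg G f v)]
              exact le_gradMax hy f
      have habsgp : ∀ v, |g v| ^ p = |f v| := fun v => abs_sgnRpow_rpow hp (f v)
      have hBge : (∑ v, |f v|) / 2 ≤ ∑ v, |h v| ^ p := by
        rcases le_or_gt 0 c with hc | hc
        · rw [← (half_mass hsum).1]
          calc ∑ v ∈ Finset.univ.filter (fun v => f v ≤ 0), |f v|
              ≤ ∑ v ∈ Finset.univ.filter (fun v => f v ≤ 0), |h v| ^ p := by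
                apply Finset.sum_le_sum
                intro v hv
                have hfv : f v ≤ 0 := (Finset.mem_filter.1 hv).2
                have hgv : g v ≤ 0 := sgnRpow_nonpos hp0 hfv
                have habs : |g v| ≤ |h v| := by
                  have : h v = g v - c := rfl
                  rw [this, abs_of_nonpos hgv, abs_of_nonpos (by linarith : g v - c ≤ 0)]
                  linarith
                rw [← habsgp v]
                exact Real.rpow_le_rpow (abs_nonneg _) habs hppos.le
            _ ≤ ∑ v, |h v| ^ p := by
                apply Finset.sum_le_sum_of_subset_of_nonneg (Finset.filter_subset _ _)
                intro v _ _
                exact Real.rpow_nonneg (abs_nonneg _) _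
        · rw [← (half_mass hsum).2]
          calc ∑ v ∈ Finset.univ.filter (fun v => ¬ f v ≤ 0), |f v|
              ≤ ∑ v ∈ Finset.univ.filter (fun v => ¬ f v ≤ 0), |h v| ^ p := by
                apply Finset.sum_le_sum
                intro v hv
                have hfv : 0 < f v := lt_of_not_ge (Finset.mem_filter.1 hv).2
                have hgv : 0 ≤ g v := sgnRpow_nonneg hfv.le
                have habs : |g v| ≤ |h v| := by
                  have : h v = g v - c := rfl
                  rw [this, abs_of_nonneg hgv, abs_of_nonneg (by linarith : 0 ≤ g v - c)]
                  linarith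
                rw [← habsgp v]
                exact Real.rpow_le_rpow (abs_nonneg _) habs hppos.le
            _ ≤ ∑ v, |h v| ^ p := by
                apply Finset.sum_le_sum_of_subset_of_nonneg (Finset.filter_subset _ _)
                intro v _ _
                exact Real.rpow_nonneg (abs_nonneg _) _
      have hYpos : (0:ℝ) < ∑ v, |f v| :=
        Finset.sum_pos' (fun v _ => abs_nonneg _)
          ⟨u, Finset.mem_univ u, abs_pos.2 (ne_of_gt hu)⟩
      have hBpos : (0:ℝ) < ∑ v, |h v| ^ p := lt_of_lt_of_le (by linarith) hBge
      have hXnn : (0:ℝ) ≤ ∑ v, |gradMax G f v| :=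
        Finset.sum_nonneg fun v _ => abs_nonneg _
      have h2nn : (0:ℝ) ≤ 2 ^ (p-1) := Real.rpow_nonneg (by norm_num) _
      have hpow : (lpNorm p (gradMax G h) / lpNorm p h) ^ p
          = (∑ v, |gradMax G h v| ^ p) / (∑ v, |h v| ^ p) := by
        rw [Real.div_rpow (lpNorm_nonneg _ _) (lpNorm_nonneg _ _),
          lpNorm_rpow hppos, lpNorm_rpow hppos]
      calc (sInf Sp) ^ p ≤ (lpNorm p (gradMax G h) / lpNorm p h) ^ p :=
            Real.rpow_le_rpow hinf0 (csInf_le hbdd hmem) hppos.le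
        _ = (∑ v, |gradMax G h v| ^ p) / (∑ v, |h v| ^ p) := hpow
        _ ≤ (2 ^ (p-1) * ∑ v, |gradMax G f v|) / ((∑ v, |f v|) / 2) :=
            div_le_div₀ (by positivity) hApB (by linarith) hBge
        _ = 2 ^ p * ((∑ v, |gradMax G f v|) / (∑ v, |f v|)) := by
            rw [(by rw [Real.rpow_sub (by norm_num : (0:ℝ) < 2), Real.rpow_one] :
              (2:ℝ) ^ (p-1) = 2 ^ p / 2)]
            field_simp
        _ = 2 ^ p * (lpNorm 1 (gradMax G f) / lpNorm 1 f) := by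
            rw [lpNorm_one, lpNorm_one]
    have h2p : (0:ℝ) < 2 ^ p := Real.rpow_pos_of_pos (by norm_num) p
    have hle : (sInf Sp) ^ p / 2 ^ p ≤ sInf S1 :=
      le_csInf hS1ne fun r hr => (div_le_iff₀ h2p).2 (by rw [mul_comm]; exact hmain r hr)
    calc (sInf Sp) ^ p = ((sInf Sp) ^ p / 2 ^ p) * 2 ^ p := by field_simp
      _ ≤ sInf S1 * 2 ^ p := mul_le_mul_of_nonneg_right hle h2p.le
      _ = 2 ^ p * sInf S1 := mul_comm _ _
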